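/- Let S be a nonempty closed convex subset of ℝ^j. Let (x_k) be a sequence in ℝ^j converging to a point x ∈ S, and (ζ_k) a sequence of nonnegative reals such that ζ_k·(x_k − P_S(x_k)) converges to some x' ∈ ℝ^j, where P_S denotes the metric projection onto S. Then x' belongs to the orthogonal of S at x, i.e. ⟨x', x'' − x⟩ ≤ 0 for every x'' ∈ S. -/

import Mathlib

theorem stmt6 {j : ℕ} (S : Set (EuclideanSpace ℝ (Fin j)))
    (hne : S.Nonempty) (hcl : IsClosed S) (hconv : Convex ℝ S)
    (P : EuclideanSpace ℝ (Fin j) → EuclideanSpace ℝ (Fin j))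
    (hP : ∀ x, P x ∈ S ∧ ‖x - P x‖ = Metric.infDist x S)
    (x : EuclideanSpace ℝ (Fin j)) (hx : x ∈ S)
    (xk : ℕ → EuclideanSpace ℝ (Fin j)) (ζ : ℕ → ℝ) (hζ : ∀ k, 0 ≤ ζ k)
    (hxk : Filter.Tendsto xk Filter.atTop (nhds x))
    (x' : EuclideanSpace ℝ (Fin j))
    (hx' : Filter.Tendsto (fun k => ζ k • (xk k - P (xk k))) Filter.atTop (nhds x')) :
    ∀ x'' ∈ S, (inner ℝ x' (x'' - x) : ℝ) ≤ 0 := by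
  intro x'' hx''
  have hS : S.Nonempty := hne
  -- infDist as iInf over subtype of norms
  have hinf : ∀ u : EuclideanSpace ℝ (Fin j), ‖u - P u‖ = ⨅ y : S, ‖u - y‖ := by
    intro u
    rw [(hP u).2, Metric.infDist_eq_iInf]
    simp only [dist_eq_norm]
  -- variational inequality at each point
  have hvar : ∀ u : EuclideanSpace ℝ (Fin j), ∀ w ∈ S,
      (inner ℝ (u - P u) (w - P u) : ℝ) ≤ 0 := by
    intro u w hw
    exact (norm_eq_iInf_iff_real_inner_le_zero hconv (hP u).1).mp (hinf u) w hw
  -- xk - P xk → 0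
  have hd0 : Filter.Tendsto (fun k => xk k - P (xk k)) Filter.atTop (nhds 0) := by
    rw [tendsto_zero_iff_norm_tendsto_zero]
    have h1 : Filter.Tendsto (fun k => dist (xk k) x) Filter.atTop (nhds 0) :=
      tendsto_iff_dist_tendsto_zero.mp hxk
    refine squeeze_zero (fun k => norm_nonneg _) (fun k => ?_) h1
    rw [(hP (xk k)).2]
    exact Metric.infDist_le_dist_of_mem hx
  -- P xk → x
  have hPxk : Filter.Tendsto (fun k => P (xk k)) Filter.atTop (nhds x) := by
    have := hxk.sub hd0
    simpa using this
  -- limit of inner products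
  have hlim : Filter.Tendsto
      (fun k => (inner ℝ (ζ k • (xk k - P (xk k))) (x'' - P (xk k)) : ℝ))
      Filter.atTop (nhds (inner ℝ x' (x'' - x) : ℝ)) := by
    have h2 : Filter.Tendsto (fun k => x'' - P (xk k)) Filter.atTop (nhds (x'' - x)) :=
      tendsto_const_nhds.sub hPxk
    exact hx'.inner h2
  refine le_of_tendsto hlim (Filter.Eventually.of_forall fun k => ?_)
  rw [real_inner_smul_left]
  exact mul_nonpos_of_nonneg_of_nonpos (hζ k) (hvar (xk k) x'' hx'')
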